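/- Let q = 3^h with h odd, and let 𝔽_q be the field with q elements (of characteristic 3). Let Q be the quadratic form on 𝔽_q^6 given by Q(X₀,…,X₅) = X₀X₅ + X₁X₄ + X₂X₃, whose quadric is a hyperbolic quadric Q⁺(5,q). Then the set 𝒪 = { ⟨(1, x, y, x+y, x+2y, −y(x+y) − x(x+2y))⟩ : x, y ∈ 𝔽_q } ∪ { ⟨(0,0,0,0,0,1)⟩ } of q²+1 projective points is an ovoid of the quadric of Q: every generator (3-dimensional totally singular subspace) contains exactly one point of 𝒪. -/

import Mathlib

open Module Set

/-- A subspace `W` is totally singular for `Q` if `Q` vanishes identically on `W`. -/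
def TotallySingular {F V : Type} [Field F] [AddCommGroup V] [Module F V]
    (Q : V → F) (W : Submodule F V) : Prop :=
  ∀ v ∈ W, Q v = 0

/-- The points of the quadric of `Q`: projective points spanned by singular vectors. -/
def QuadricPoints {F V : Type} [Field F] [AddCommGroup V] [Module F V]
    (Q : V → F) : Set (Submodule F V) :=
  {p | ∃ v : V, v ≠ 0 ∧ Q v = 0 ∧ p = Submodule.span F {v}}

/-- The quadratic form `X₀X₅ + X₁X₄ + X₂X₃` of the hyperbolic quadric `Q⁺(5,q)`. -/
def hypQuadric (F : Type) [Field F] : (Fin 6 → F) → F :=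
  fun v => v 0 * v 5 + v 1 * v 4 + v 2 * v 3

/-- The point set `𝒪(f₁,f₂)` with `f₁(x,y) = x+y` and `f₂(x,y) = x+2y`. -/
def segreOvoid (F : Type) [Field F] : Set (Submodule F (Fin 6 → F)) :=
  {p | ∃ x y : F,
      p = Submodule.span F
        {![1, x, y, x + y, x + 2 * y, -(y * (x + y)) - x * (x + 2 * y)]}} ∪
    {Submodule.span F {![0, 0, 0, 0, 0, 1]}}

/-- For `q = 3^h`, `h` odd, the set `𝒪(f₁,f₂)` with `f₁(x,y) = x+y`, `f₂(x,y) = x+2y`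
is a set of `q²+1` projective points forming an ovoid of the hyperbolic quadric
`Q⁺(5,q) : X₀X₅ + X₁X₄ + X₂X₃ = 0`: every generator (3-dimensional totally singular
subspace) contains exactly one of its points. -/


private lemma rank1 {F : Type} [Field F] (p1 p2 p3 p4 : F)
    (hQ : p1*p4 + p2*p3 = 0) (hne : ¬(p1 = 0 ∧ p2 = 0 ∧ p3 = 0 ∧ p4 = 0)) :
    ∃ α β s t : F, (α ≠ 0 ∨ β ≠ 0) ∧ (s ≠ 0 ∨ t ≠ 0) ∧
      p1 = α*s ∧ p2 = α*t ∧ p3 = β*s ∧ p4 = -(β*t) := by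
  by_cases h1 : p1 = 0
  · by_cases h2 : p2 = 0
    · refine ⟨0, 1, p3, -p4, Or.inr one_ne_zero, ?_, by rw [h1]; ring, by rw [h2]; ring,
        by ring, by ring⟩
      by_contra hc
      push_neg at hc
      exact hne ⟨h1, h2, hc.1, neg_eq_zero.mp hc.2⟩
    · have h3 : p3 = 0 := by
        have : p2 * p3 = 0 := by rw [h1] at hQ; linear_combination hQ
        rcases mul_eq_zero.mp this with h | h
        · exact absurd h h2
        · exact h
      refine ⟨1, -p4/p2, 0, p2, Or.inl one_ne_zero, Or.inr h2, by rw [h1]; ring, by ring,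
        by rw [h3]; ring, by field_simp⟩
  · refine ⟨1, p3/p1, p1, p2, Or.inl one_ne_zero, Or.inl h1, by ring, by ring, by field_simp,
      ?_⟩
    field_simp
    linear_combination hQ

private lemma prop2 {F : Type} [Field F] (x1 y1 x2 y2 : F) (h : ¬(x1 = 0 ∧ y1 = 0))
    (hc : x1*y2 = y1*x2) : ∃ μ : F, x2 = μ*x1 ∧ y2 = μ*y1 := by
  by_cases hx : x1 = 0
  · have hy : y1 ≠ 0 := fun hy => h ⟨hx, hy⟩
    have hx2 : x2 = 0 := by
      have : y1 * x2 = 0 := by rw [hx] at hc; linear_combination -hc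
      rcases mul_eq_zero.mp this with h' | h'
      · exact absurd h' hy
      · exact h'
    exact ⟨y2/y1, by rw [hx2, hx]; ring, by field_simp⟩
  · refine ⟨x2/x1, by field_simp, ?_⟩
    field_simp
    linear_combination hc

private lemma coreTail {F : Type} [Field F] (a b c d p1 p2 p3 p4 r1 r2 r3 r4 : F)
    (hDD : ((p1+p2-p3)*(r1+2*r2-r4) - (r1+r2-r3)*(p1+2*p2-p4)) ≠ 0)
    (hR : ((-(p1*p1) - 3*p1*p2 - p2*p2)*((c-a-b)*(r1+2*r2-r4) - (d-a-2*b)*(r1+r2-r3))*((c-a-b)*(r1+2*r2-r4) - (d-a-2*b)*(r1+r2-r3)) + (-2*p1*r1 - 3*(p1*r2+p2*r1) - 2*p2*r2)*((c-a-b)*(r1+2*r2-r4) - (d-a-2*b)*(r1+r2-r3))*((d-a-2*b)*(p1+p2-p3) - (c-a-b)*(p1+2*p2-p4)) + (-(r1*r1) - 3*r1*r2 - r2*r2)*((d-a-2*b)*(p1+p2-p3) - (c-a-b)*(p1+2*p2-p4))*((d-a-2*b)*(p1+p2-p3) - (c-a-b)*(p1+2*p2-p4)) + (-2*a*p1 -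 3*(a*p2+b*p1) - 2*b*p2 - (-(a*p4+d*p1+b*p3+c*p2)))*((c-a-b)*(r1+2*r2-r4) - (d-a-2*b)*(r1+r2-r3))*((p1+p2-p3)*(r1+2*r2-r4) - (r1+r2-r3)*(p1+2*p2-p4)) + (-2*a*r1 - 3*(a*r2+b*r1) - 2*b*r2 - (-(a*r4+d*r1+b*r3+c*r2)))*((d-a-2*b)*(p1+p2-p3) - (c-a-b)*(p1+2*p2-p4))*((p1+p2-p3)*(r1+2*r2-r4) - (r1+r2-r3)*(p1+2*p2-p4)) + (-(a*a) - 3*a*b - b*b + (a*d+b*c))*((p1+p2-p3)*(r1+2*r2-r4) - (r1+r2-r3)*(p1+2*p2-p4))*((p1+p2-p3)*(r1+2*r2-r4) - (r1+r2-r3)*(p1+2*p2-p4))) = 0) :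
    ∃! z : F × F × F × F,
      z.1 - a = z.2.2.1 * p1 + z.2.2.2 * r1 ∧
      z.2.1 - b = z.2.2.1 * p2 + z.2.2.2 * r2 ∧
      z.1 + z.2.1 - c = z.2.2.1 * p3 + z.2.2.2 * r3 ∧
      z.1 + 2*z.2.1 - d = z.2.2.1 * p4 + z.2.2.2 * r4 ∧
      -(z.2.1*(z.1+z.2.1)) - z.1*(z.1+2*z.2.1) - -(a*d+b*c) =
        z.2.2.1 * -(a*p4+d*p1+b*p3+c*p2) + z.2.2.2 * -(a*r4+d*r1+b*r3+c*r2) := by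
  obtain ⟨zu, hzu⟩ : ∃ zu : F, zu = ((c-a-b)*(r1+2*r2-r4) - (d-a-2*b)*(r1+r2-r3)) / ((p1+p2-p3)*(r1+2*r2-r4) - (r1+r2-r3)*(p1+2*p2-p4)) := ⟨_, rfl⟩
  obtain ⟨zw, hzw⟩ : ∃ zw : F, zw = ((d-a-2*b)*(p1+p2-p3) - (c-a-b)*(p1+2*p2-p4)) / ((p1+p2-p3)*(r1+2*r2-r4) - (r1+r2-r3)*(p1+2*p2-p4)) := ⟨_, rfl⟩
  have hu : zu * ((p1+p2-p3)*(r1+2*r2-r4) - (r1+r2-r3)*(p1+2*p2-p4)) = ((c-a-b)*(r1+2*r2-r4) - (d-a-2*b)*(r1+r2-r3)) := by rw [hzu]; exact div_mul_cancel₀ _ hDD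
  have hw : zw * ((p1+p2-p3)*(r1+2*r2-r4) - (r1+r2-r3)*(p1+2*p2-p4)) = ((d-a-2*b)*(p1+p2-p3) - (c-a-b)*(p1+2*p2-p4)) := by rw [hzw]; exact div_mul_cancel₀ _ hDD
  obtain ⟨zx, hzx⟩ : ∃ zx : F, zx = a + zu*p1 + zw*r1 := ⟨_, rfl⟩
  obtain ⟨zy, hzy⟩ : ∃ zy : F, zy = b + zu*p2 + zw*r2 := ⟨_, rfl⟩
  have e1 : zx - a = zu * p1 + zw * r1 := by rw [hzx]; ring
  have e2 : zy - b = zu * p2 + zw * r2 := by rw [hzy]; ring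
  have e3 : zx + zy - c = zu * p3 + zw * r3 := by
    have hkey : (zx + zy - c - (zu * p3 + zw * r3)) * ((p1+p2-p3)*(r1+2*r2-r4) - (r1+r2-r3)*(p1+2*p2-p4)) = 0 := by
      rw [hzx, hzy]
      linear_combination (p1+p2-p3)*hu + (r1+r2-r3)*hw
    have := (mul_eq_zero.mp hkey).resolve_right hDD
    linear_combination this
  have e4 : zx + 2*zy - d = zu * p4 + zw * r4 := by
    have hkey : (zx + 2*zy - d - (zu * p4 + zw * r4)) * ((p1+p2-p3)*(r1+2*r2-r4) - (r1+r2-r3)*(p1+2*p2-p4)) = 0 := by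
      rw [hzx, hzy]
      linear_combination (p1+2*p2-p4)*hu + (r1+2*r2-r4)*hw
    have := (mul_eq_zero.mp hkey).resolve_right hDD
    linear_combination this
  have e5 : -(zy*(zx+zy)) - zx*(zx+2*zy) - -(a*d+b*c) =
      zu * -(a*p4+d*p1+b*p3+c*p2) + zw * -(a*r4+d*r1+b*r3+c*r2) := by
    have hkey : (-(zy*(zx+zy)) - zx*(zx+2*zy) - -(a*d+b*c)
        - (zu * -(a*p4+d*p1+b*p3+c*p2) + zw * -(a*r4+d*r1+b*r3+c*r2)))
        * (((p1+p2-p3)*(r1+2*r2-r4) - (r1+r2-r3)*(p1+2*p2-p4)) * ((p1+p2-p3)*(r1+2*r2-r4) - (r1+r2-r3)*(p1+2*p2-p4))) = 0 := by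
      rw [hzx, hzy]
      linear_combination ((-(p1*p1) - 3*p1*p2 - p2*p2)*(zu*((p1+p2-p3)*(r1+2*r2-r4) - (r1+r2-r3)*(p1+2*p2-p4))) + (-(p1*p1) - 3*p1*p2 - p2*p2)*((c-a-b)*(r1+2*r2-r4) - (d-a-2*b)*(r1+r2-r3)) + (-2*p1*r1 - 3*(p1*r2+p2*r1) - 2*p2*r2)*(zw*((p1+p2-p3)*(r1+2*r2-r4) - (r1+r2-r3)*(p1+2*p2-p4))) + (-2*a*p1 - 3*(a*p2+b*p1) - 2*b*p2 - (-(a*p4+d*p1+b*p3+c*p2)))*((p1+p2-p3)*(r1+2*r2-r4) - (r1+r2-r3)*(p1+2*p2-p4)))*hu + ((-2*p1*r1 - 3*(p1*r2+p2*r1) - 2*p2*r2)*((c-a-b)*(r1+2*r2-r4) - (d-a-2*b)*(r1+r2-r3)) + (-(r1*r1) - 3*r1*r2 - r2*r2)*(zw*((p1+p2-p3)*(r1+2*r2-r4) - (r1+r2-r3)*(p1+2*p2-p4))) + (-(r1*r1) - 3*r1*r2 - r2*r2)*((d-a-2*b)*(p1+p2-p3) - (c-a-b)*(p1+2*p2-p4))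 + (-2*a*r1 - 3*(a*r2+b*r1) - 2*b*r2 - (-(a*r4+d*r1+b*r3+c*r2)))*((p1+p2-p3)*(r1+2*r2-r4) - (r1+r2-r3)*(p1+2*p2-p4)))*hw + hR
    have := (mul_eq_zero.mp hkey).resolve_right (mul_ne_zero hDD hDD)
    linear_combination this
  refine ⟨⟨zx, zy, zu, zw⟩, ⟨e1, e2, e3, e4, e5⟩, ?_⟩
  rintro ⟨x', y', u', w'⟩ ⟨h1, h2, h3, h4, _⟩
  dsimp only at h1 h2 h3 h4 ⊢
  have hu' : u' * ((p1+p2-p3)*(r1+2*r2-r4) - (r1+r2-r3)*(p1+2*p2-p4)) = ((c-a-b)*(r1+2*r2-r4) - (d-a-2*b)*(r1+r2-r3)) := by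
    linear_combination (r1+2*r2-r4)*(h3 - h1 - h2) - (r1+r2-r3)*(h4 - h1 - 2*h2)
  have hw' : w' * ((p1+p2-p3)*(r1+2*r2-r4) - (r1+r2-r3)*(p1+2*p2-p4)) = ((d-a-2*b)*(p1+p2-p3) - (c-a-b)*(p1+2*p2-p4)) := by
    linear_combination (p1+p2-p3)*(h4 - h1 - 2*h2) - (p1+2*p2-p4)*(h3 - h1 - h2)
  have huu : u' = zu := by
    have : (u' - zu) * ((p1+p2-p3)*(r1+2*r2-r4) - (r1+r2-r3)*(p1+2*p2-p4)) = 0 := by linear_combination hu' - hu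
    have := (mul_eq_zero.mp this).resolve_right hDD
    linear_combination this
  have hww : w' = zw := by
    have : (w' - zw) * ((p1+p2-p3)*(r1+2*r2-r4) - (r1+r2-r3)*(p1+2*p2-p4)) = 0 := by linear_combination hw' - hw
    have := (mul_eq_zero.mp this).resolve_right hDD
    linear_combination this
  have hxx : x' = zx := by rw [hzx]; linear_combination h1 + p1*huu + r1*hww
  have hyy : y' = zy := by rw [hzy]; linear_combination h2 + p2*huu + r2*hww
  rw [hxx, hyy, huu, hww]

private lemma core {F : Type} [Field F] (h3 : (3:F) = 0)
    (hns : ∀ u v : F, u*u + v*v = 0 → u = 0 ∧ v = 0)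
    (a b c d p1 p2 p3 p4 p5 r1 r2 r3 r4 r5 e : F)
    (he : e = -(a*d + b*c))
    (hp5 : p5 = -(a*p4 + d*p1 + b*p3 + c*p2))
    (hr5 : r5 = -(a*r4 + d*r1 + b*r3 + c*r2))
    (hQp : p1*p4 + p2*p3 = 0)
    (hQr : r1*r4 + r2*r3 = 0)
    (hBpr : p1*r4 + p4*r1 + p2*r3 + p3*r2 = 0)
    (hpne : ¬ (p1 = 0 ∧ p2 = 0 ∧ p3 = 0 ∧ p4 = 0))
    (hind : ∀ μ : F, ¬ (r1 = μ*p1 ∧ r2 = μ*p2 ∧ r3 = μ*p3 ∧ r4 = μ*p4)) :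
    ∃! z : F × F × F × F,
      z.1 - a = z.2.2.1 * p1 + z.2.2.2 * r1 ∧
      z.2.1 - b = z.2.2.1 * p2 + z.2.2.2 * r2 ∧
      z.1 + z.2.1 - c = z.2.2.1 * p3 + z.2.2.2 * r3 ∧
      z.1 + 2*z.2.1 - d = z.2.2.1 * p4 + z.2.2.2 * r4 ∧
      -(z.2.1*(z.1+z.2.1)) - z.1*(z.1+2*z.2.1) - e = z.2.2.1 * p5 + z.2.2.2 * r5 := by
  subst he hp5 hr5
  have hrne : ¬ (r1 = 0 ∧ r2 = 0 ∧ r3 = 0 ∧ r4 = 0) := by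
    rintro ⟨hh1, hh2, hh3, hh4⟩
    exact hind 0 ⟨by rw [hh1]; ring, by rw [hh2]; ring, by rw [hh3]; ring, by rw [hh4]; ring⟩
  obtain ⟨al, be, s, t, hαβ, hst, hP1, hP2, hP3, hP4⟩ := rank1 p1 p2 p3 p4 hQp hpne
  obtain ⟨ga, de, s', t', hγδ, hs't', hR1, hR2, hR3, hR4⟩ := rank1 r1 r2 r3 r4 hQr hrne
  have hαβ' : ¬(al = 0 ∧ be = 0) := fun ⟨u1, u2⟩ => hαβ.elim (· u1) (· u2)
  have hst' : ¬(s = 0 ∧ t = 0) := fun ⟨u1, u2⟩ => hst.elim (· u1) (· u2)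
  subst hP1 hP2 hP3 hP4 hR1 hR2 hR3 hR4
  have hsplit : (al*de - be*ga) * (t*s' - s*t') = 0 := by linear_combination hBpr
  rcases mul_eq_zero.mp hsplit with hcol | hrow
  · -- common column case
    obtain ⟨mu, hγμ, hδμ⟩ := prop2 al be ga de hαβ' (by linear_combination hcol)
    subst hγμ hδμ
    have hμ : mu ≠ 0 := by
      rintro rfl
      rcases hγδ with h' | h' <;> simp at h'
    have hts : t*s' - s*t' ≠ 0 := by
      intro h0
      obtain ⟨nu, hsnu, htnu⟩ := prop2 s t s' t' hst' (by linear_combination -h0)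
      subst hsnu htnu
      exact hind (mu*nu) ⟨by ring, by ring, by ring, by ring⟩
    have hq : (be-al)*(be-al) + al*al ≠ 0 := by
      intro h0
      obtain ⟨hz1, hz2⟩ := hns _ _ h0
      exact hαβ' ⟨hz2, by linear_combination hz1 + hz2⟩
    have hDval : (((al*s)+(al*t)-(be*s))*((mu*al*s')+2*(mu*al*t')-(-(mu*be*t'))) - ((mu*al*s')+(mu*al*t')-(mu*be*s'))*((al*s)+2*(al*t)-(-(be*t)))) = (mu*(t*s' - s*t')) * ((be-al)*(be-al) + al*al) := by
      linear_combination (al*be*mu*t*s' - al*be*mu*s*t' - al*al*mu*t*s' + al*al*mu*s*t')*h3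
    have hDD : (((al*s)+(al*t)-(be*s))*((mu*al*s')+2*(mu*al*t')-(-(mu*be*t'))) - ((mu*al*s')+(mu*al*t')-(mu*be*s'))*((al*s)+2*(al*t)-(-(be*t)))) ≠ 0 := by
      rw [hDval]; exact mul_ne_zero (mul_ne_zero hμ hts) hq
    have hR : ((-((al*s)*(al*s)) - 3*(al*s)*(al*t) - (al*t)*(al*t))*((c-a-b)*((mu*al*s')+2*(mu*al*t')-(-(mu*be*t'))) - (d-a-2*b)*((mu*al*s')+(mu*al*t')-(mu*be*s')))*((c-a-b)*((mu*al*s')+2*(mu*al*t')-(-(mu*be*t'))) - (d-a-2*b)*((mu*al*s')+(mu*al*t')-(mu*be*s'))) + (-2*(al*s)*(mu*al*s') - 3*((al*s)*(mu*al*t')+(al*t)*(mu*al*s')) - 2*(al*t)*(mu*al*t'))*((c-a-b)*((mu*al*s')+2*(mu*al*t')-(-(mu*be*t'))) - (d-a-2*b)*((mu*al*s')+(mu*al*t')-(mu*be*s')))*((d-a-2*b)*((al*s)+(al*t)-(be*s)) - (c-a-b)*((al*s)+2*(al*t)-(-(be*t)))) + (-((mu*al*s')*(mu*al*s')) - 3*(mu*al*s')*(mu*al*t')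 - (mu*al*t')*(mu*al*t'))*((d-a-2*b)*((al*s)+(al*t)-(be*s)) - (c-a-b)*((al*s)+2*(al*t)-(-(be*t))))*((d-a-2*b)*((al*s)+(al*t)-(be*s)) - (c-a-b)*((al*s)+2*(al*t)-(-(be*t)))) + (-2*a*(al*s) - 3*(a*(al*t)+b*(al*s)) - 2*b*(al*t) - (-(a*(-(be*t))+d*(al*s)+b*(be*s)+c*(al*t))))*((c-a-b)*((mu*al*s')+2*(mu*al*t')-(-(mu*be*t'))) - (d-a-2*b)*((mu*al*s')+(mu*al*t')-(mu*be*s')))*(((al*s)+(al*t)-(be*s))*((mu*al*s')+2*(mu*al*t')-(-(mu*be*t'))) - ((mu*al*s')+(mu*al*t')-(mu*be*s'))*((al*s)+2*(al*t)-(-(be*t)))) + (-2*a*(mu*al*s') - 3*(a*(mu*al*t')+b*(mu*al*s')) - 2*b*(mu*al*t') - (-(a*(-(mu*be*t'))+d*(mu*al*s')+b*(mu*be*s')+c*(mu*al*t'))))*((d-a-2*b)*((al*s)+(al*t)-(be*s)) - (c-a-b)*((al*s)+2*(al*t)-(-(be*t))))*(((al*s)+(al*t)-(be*s))*((mu*al*s')+2*(mu*al*t')-(-(mu*be*t')))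 - ((mu*al*s')+(mu*al*t')-(mu*be*s'))*((al*s)+2*(al*t)-(-(be*t)))) + (-(a*a) - 3*a*b - b*b + (a*d+b*c))*(((al*s)+(al*t)-(be*s))*((mu*al*s')+2*(mu*al*t')-(-(mu*be*t'))) - ((mu*al*s')+(mu*al*t')-(mu*be*s'))*((al*s)+2*(al*t)-(-(be*t))))*(((al*s)+(al*t)-(be*s))*((mu*al*s')+2*(mu*al*t')-(-(mu*be*t'))) - ((mu*al*s')+(mu*al*t')-(mu*be*s'))*((al*s)+2*(al*t)-(-(be*t))))) = 0 := by ring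
    exact coreTail a b c d (al*s) (al*t) (be*s) (-(be*t)) (mu*al*s') (mu*al*t') (mu*be*s')
      (-(mu*be*t')) hDD hR
  · -- common row case
    obtain ⟨lam, hsl, htl⟩ := prop2 s t s' t' hst' (by linear_combination -hrow)
    subst hsl htl
    have hlam : lam ≠ 0 := by
      rintro rfl
      rcases hs't' with h' | h' <;> simp at h'
    have hαδ : al*de - be*ga ≠ 0 := by
      intro h0
      obtain ⟨mu, hγμ, hδμ⟩ := prop2 al be ga de hαβ' (by linear_combination h0)
      subst hγμ hδμ
      exact hind (mu*lam) ⟨by ring, by ring, by ring, by ring⟩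
    have hq : s*s + t*t ≠ 0 := by
      intro h0
      obtain ⟨hz1, hz2⟩ := hns _ _ h0
      exact hst' ⟨hz1, hz2⟩
    have hDval : (((al*s)+(al*t)-(be*s))*((ga*(lam*s))+2*(ga*(lam*t))-(-(de*(lam*t)))) - ((ga*(lam*s))+(ga*(lam*t))-(de*(lam*s)))*((al*s)+2*(al*t)-(-(be*t)))) = ((al*de - be*ga)*lam) * (s*s + t*t) := by
      linear_combination (-(be*ga*lam*s*t) + al*de*lam*s*t)*h3
    have hDD : (((al*s)+(al*t)-(be*s))*((ga*(lam*s))+2*(ga*(lam*t))-(-(de*(lam*t)))) - ((ga*(lam*s))+(ga*(lam*t))-(de*(lam*s)))*((al*s)+2*(al*t)-(-(be*t)))) ≠ 0 := by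
      rw [hDval]; exact mul_ne_zero (mul_ne_zero hαδ hlam) hq
    have hR : ((-((al*s)*(al*s)) - 3*(al*s)*(al*t) - (al*t)*(al*t))*((c-a-b)*((ga*(lam*s))+2*(ga*(lam*t))-(-(de*(lam*t)))) - (d-a-2*b)*((ga*(lam*s))+(ga*(lam*t))-(de*(lam*s))))*((c-a-b)*((ga*(lam*s))+2*(ga*(lam*t))-(-(de*(lam*t)))) - (d-a-2*b)*((ga*(lam*s))+(ga*(lam*t))-(de*(lam*s)))) + (-2*(al*s)*(ga*(lam*s)) - 3*((al*s)*(ga*(lam*t))+(al*t)*(ga*(lam*s))) - 2*(al*t)*(ga*(lam*t)))*((c-a-b)*((ga*(lam*s))+2*(ga*(lam*t))-(-(de*(lam*t)))) - (d-a-2*b)*((ga*(lam*s))+(ga*(lam*t))-(de*(lam*s))))*((d-a-2*b)*((al*s)+(al*t)-(be*s)) - (c-a-b)*((al*s)+2*(al*t)-(-(be*t)))) + (-((ga*(lam*s))*(ga*(lam*s))) - 3*(ga*(lam*s))*(ga*(lam*t)) - (ga*(lam*t))*(ga*(lam*t)))*((d-a-2*b)*((al*s)+(al*t)-(be*s)) -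 (c-a-b)*((al*s)+2*(al*t)-(-(be*t))))*((d-a-2*b)*((al*s)+(al*t)-(be*s)) - (c-a-b)*((al*s)+2*(al*t)-(-(be*t)))) + (-2*a*(al*s) - 3*(a*(al*t)+b*(al*s)) - 2*b*(al*t) - (-(a*(-(be*t))+d*(al*s)+b*(be*s)+c*(al*t))))*((c-a-b)*((ga*(lam*s))+2*(ga*(lam*t))-(-(de*(lam*t)))) - (d-a-2*b)*((ga*(lam*s))+(ga*(lam*t))-(de*(lam*s))))*(((al*s)+(al*t)-(be*s))*((ga*(lam*s))+2*(ga*(lam*t))-(-(de*(lam*t)))) - ((ga*(lam*s))+(ga*(lam*t))-(de*(lam*s)))*((al*s)+2*(al*t)-(-(be*t)))) + (-2*a*(ga*(lam*s)) - 3*(a*(ga*(lam*t))+b*(ga*(lam*s))) - 2*b*(ga*(lam*t)) - (-(a*(-(de*(lam*t)))+d*(ga*(lam*s))+b*(de*(lam*s))+c*(ga*(lam*t)))))*((d-a-2*b)*((al*s)+(al*t)-(be*s)) - (c-a-b)*((al*s)+2*(al*t)-(-(be*t))))*(((al*s)+(al*t)-(be*s))*((ga*(lam*s))+2*(ga*(lam*t))-(-(de*(lam*t))))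 - ((ga*(lam*s))+(ga*(lam*t))-(de*(lam*s)))*((al*s)+2*(al*t)-(-(be*t)))) + (-(a*a) - 3*a*b - b*b + (a*d+b*c))*(((al*s)+(al*t)-(be*s))*((ga*(lam*s))+2*(ga*(lam*t))-(-(de*(lam*t)))) - ((ga*(lam*s))+(ga*(lam*t))-(de*(lam*s)))*((al*s)+2*(al*t)-(-(be*t))))*(((al*s)+(al*t)-(be*s))*((ga*(lam*s))+2*(ga*(lam*t))-(-(de*(lam*t)))) - ((ga*(lam*s))+(ga*(lam*t))-(de*(lam*s)))*((al*s)+2*(al*t)-(-(be*t))))) = 0 := by ring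
    exact coreTail a b c d (al*s) (al*t) (be*s) (-(be*t)) (ga*(lam*s)) (ga*(lam*t)) (de*(lam*s))
      (-(de*(lam*t))) hDD hR

-- helpers
private lemma v6_0 {α : Type} (a b c d e f : α) : ![a,b,c,d,e,f] 0 = a := rfl
private lemma v6_1 {α : Type} (a b c d e f : α) : ![a,b,c,d,e,f] 1 = b := rfl
private lemma v6_2 {α : Type} (a b c d e f : α) : ![a,b,c,d,e,f] 2 = c := rfl
private lemma v6_3 {α : Type} (a b c d e f : α) : ![a,b,c,d,e,f] 3 = d := rfl
private lemma v6_4 {α : Type} (a b c d e f : α) : ![a,b,c,d,e,f] 4 = e := rfl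
private lemma v6_5 {α : Type} (a b c d e f : α) : ![a,b,c,d,e,f] 5 = f := rfl

private lemma funext6 {α : Type} (u v : Fin 6 → α) (h0 : u 0 = v 0) (h1 : u 1 = v 1)
    (h2 : u 2 = v 2) (h3 : u 3 = v 3) (h4 : u 4 = v 4) (h5 : u 5 = v 5) : u = v := by
  funext i; fin_cases i <;> assumption

private noncomputable def bb (F : Type) [Field F] : LinearMap.BilinForm F (Fin 6 → F) :=
  LinearMap.mk₂ F (fun u w => u 0 * w 5 + u 5 * w 0 + u 1 * w 4 + u 4 * w 1 + u 2 * w 3 + u 3 * w 2)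
    (by intros; simp only [Pi.add_apply]; ring)
    (by intros; simp only [Pi.smul_apply, smul_eq_mul]; ring)
    (by intros; simp only [Pi.add_apply]; ring)
    (by intros; simp only [Pi.smul_apply, smul_eq_mul]; ring)

private lemma bb_apply {F : Type} [Field F] (u w : Fin 6 → F) :
    bb F u w = u 0 * w 5 + u 5 * w 0 + u 1 * w 4 + u 4 * w 1 + u 2 * w 3 + u 3 * w 2 := rfl

private lemma bb_refl {F : Type} [Field F] : (bb F).IsRefl := fun u w h => by
  rw [bb_apply] at h ⊢; linear_combination h

private lemma bb_nondeg {F : Type} [Field F] : (bb F).Nondegenerate := by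
  refine (LinearMap.IsRefl.nondegenerate_iff_separatingLeft (B := bb F) bb_refl).mpr ?_
  intro u hu
  funext i
  fin_cases i
  · simpa [bb_apply, v6_0, v6_1, v6_2, v6_3, v6_4, v6_5] using hu ![0,0,0,0,0,1]
  · simpa [bb_apply, v6_0, v6_1, v6_2, v6_3, v6_4, v6_5] using hu ![0,0,0,0,1,0]
  · simpa [bb_apply, v6_0, v6_1, v6_2, v6_3, v6_4, v6_5] using hu ![0,0,0,1,0,0]
  · simpa [bb_apply, v6_0, v6_1, v6_2, v6_3, v6_4, v6_5] using hu ![0,0,1,0,0,0]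
  · simpa [bb_apply, v6_0, v6_1, v6_2, v6_3, v6_4, v6_5] using hu ![0,1,0,0,0,0]
  · simpa [bb_apply, v6_0, v6_1, v6_2, v6_3, v6_4, v6_5] using hu ![1,0,0,0,0,0]

private noncomputable def vv {F : Type} [Field F] (x y : F) : Fin 6 → F :=
  ![1, x, y, x + y, x + 2 * y, -(y * (x + y)) - x * (x + 2 * y)]

private lemma segre_eq (F : Type) [Field F] :
    segreOvoid F = {p | ∃ x y : F, p = Submodule.span F {vv x y}} ∪
      {Submodule.span F {![0, 0, 0, 0, 0, 1]}} := rfl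

-- characteristic-3 fact
private lemma char3 {q h : ℕ} (hodd : Odd h) (hq : q = 3 ^ h)
    {F : Type} [Field F] [Fintype F] (hcard : Fintype.card F = q) : (3 : F) = 0 := by
  have hh : h ≠ 0 := by rcases hodd with ⟨m, rfl⟩; omega
  have h0 := FiniteField.cast_card_eq_zero F
  rw [hcard, hq] at h0
  push_cast at h0
  exact (pow_eq_zero_iff hh).mp h0

private lemma nonsq {q h : ℕ} (hodd : Odd h) (hq : q = 3 ^ h)
    {F : Type} [Field F] [Fintype F] (hcard : Fintype.card F = q) :
    ∀ u v : F, u*u + v*v = 0 → u = 0 ∧ v = 0 := by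
  intro u v huv
  by_cases hv : v = 0
  · subst hv
    have : u * u = 0 := by linear_combination huv
    exact ⟨mul_self_eq_zero.mp this, rfl⟩
  · exfalso
    have hsq : IsSquare (-1 : F) := by
      refine ⟨u / v, ?_⟩
      field_simp
      linear_combination -huv
    rw [FiniteField.isSquare_neg_one_iff] at hsq
    rcases hodd with ⟨m, rfl⟩
    have h9 : (9:ℕ)^m % 4 = 1 := by
      have := Nat.pow_mod 9 m 4
      simpa using this
    have h3m : (3:ℕ)^(2*m+1) = 3 * 9^m := by
      rw [pow_succ, pow_mul]
      norm_num [Nat.mul_comm]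
    have key : (3:ℕ)^(2*m+1) % 4 = 3 := by
      rw [h3m]; omega
    exact hsq (by rw [hcard, hq]; exact key)

private lemma part1 (F : Type) [Field F] :
    segreOvoid F ⊆ QuadricPoints (hypQuadric F) := by
  rintro p (⟨x, y, rfl⟩ | rfl)
  · refine ⟨![1, x, y, x + y, x + 2 * y, -(y * (x + y)) - x * (x + 2 * y)], ?_, ?_, rfl⟩
    · intro hz
      have := congrFun hz 0
      rw [v6_0] at this
      exact one_ne_zero this
    · show hypQuadric F _ = 0
      unfold hypQuadric
      rw [v6_0, v6_1, v6_2, v6_3, v6_4, v6_5]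
      ring
  · refine ⟨![0,0,0,0,0,1], ?_, ?_, rfl⟩
    · intro hz
      have := congrFun hz 5
      rw [v6_5] at this
      exact one_ne_zero this
    · show hypQuadric F _ = 0
      unfold hypQuadric
      rw [v6_0, v6_1, v6_2, v6_3, v6_4, v6_5]
      ring

private lemma span_vv_inj {F : Type} [Field F] {x y x' y' : F}
    (h : Submodule.span F {vv x y} = Submodule.span F {vv x' y'}) : x = x' ∧ y = y' := by
  have hm : vv x y ∈ Submodule.span F {vv x' y'} := h ▸ Submodule.mem_span_singleton_self _
  obtain ⟨cc, hcc⟩ := Submodule.mem_span_singleton.mp hm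
  have h0 := congrFun hcc 0
  have h1 := congrFun hcc 1
  have h2 := congrFun hcc 2
  simp only [vv, Pi.smul_apply, smul_eq_mul, v6_0, v6_1, v6_2] at h0 h1 h2
  rw [mul_one] at h0
  subst h0
  rw [one_mul] at h1 h2
  exact ⟨h1.symm, h2.symm⟩

private lemma span_vv_ne {F : Type} [Field F] (x y : F) :
    Submodule.span F {vv x y} ≠ Submodule.span F {(![0,0,0,0,0,1] : Fin 6 → F)} := by
  intro h
  have hm : vv x y ∈ Submodule.span F {(![0,0,0,0,0,1] : Fin 6 → F)} :=
    h ▸ Submodule.mem_span_singleton_self _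
  obtain ⟨cc, hcc⟩ := Submodule.mem_span_singleton.mp hm
  have h0 := congrFun hcc 0
  simp only [vv, Pi.smul_apply, smul_eq_mul, v6_0] at h0
  rw [mul_zero] at h0
  exact one_ne_zero h0.symm

private lemma part2 {q : ℕ}
    {F : Type} [Field F] [Fintype F] (hcard : Fintype.card F = q) :
    (segreOvoid F).ncard = q ^ 2 + 1 := by
  classical
  rw [segre_eq]
  have hr : {p : Submodule F (Fin 6 → F) | ∃ x y : F, p = Submodule.span F {vv x y}} =
      Set.range (fun z : F × F => Submodule.span F {vv z.1 z.2}) := by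
    ext p
    constructor
    · rintro ⟨x, y, rfl⟩; exact ⟨(x, y), rfl⟩
    · rintro ⟨⟨x, y⟩, rfl⟩; exact ⟨x, y, rfl⟩
  rw [hr]
  have hinj : Function.Injective (fun z : F × F => Submodule.span F {vv z.1 z.2}) := by
    rintro ⟨x, y⟩ ⟨x', y'⟩ hfz
    obtain ⟨h1, h2⟩ := span_vv_inj hfz
    exact Prod.ext h1 h2
  rw [Set.ncard_union_eq ?_ (Set.finite_range _) (Set.finite_singleton _)]
  · rw [Set.ncard_singleton, ← Nat.card_coe_set_eq, Nat.card_range_of_injective hinj,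
      Nat.card_prod, Nat.card_eq_fintype_card, hcard, pow_two]
  · rw [Set.disjoint_singleton_right]
    rintro ⟨⟨x, y⟩, hfz⟩
    exact span_vv_ne x y hfz

section
variable {F : Type} [Field F]

private lemma ker_basis_pair {M : Type} [AddCommGroup M] [Module F M] [FiniteDimensional F M]
    (hM : Module.finrank F M = 3) (φ : M →ₗ[F] F) (hsurj : LinearMap.range φ = ⊤) :
    ∃ k k' : M, φ k = 0 ∧ φ k' = 0 ∧
      (∀ cc cc' : F, cc • k + cc' • k' = 0 → cc = 0 ∧ cc' = 0) ∧
      (∀ m : M, φ m = 0 → ∃ uu ww : F, m = uu • k + ww • k') := by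
  have hker2 : Module.finrank F (LinearMap.ker φ) = 2 := by
    have h1 := LinearMap.finrank_range_add_finrank_ker φ
    rw [hsurj, finrank_top, Module.finrank_self, hM] at h1
    omega
  let bKB : Basis (Fin 2) F (LinearMap.ker φ) := Module.finBasisOfFinrankEq F _ hker2
  refine ⟨(bKB 0).1, (bKB 1).1, LinearMap.mem_ker.mp (bKB 0).2, LinearMap.mem_ker.mp (bKB 1).2,
    ?_, ?_⟩
  · intro cc cc' hcc
    have hker : cc • bKB 0 + cc' • bKB 1 = 0 := Subtype.ext hcc
    have h3' := Fintype.linearIndependent_iff.mp bKB.linearIndependent ![cc, cc']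
      (by rw [Fin.sum_univ_two]; exact hker)
    exact ⟨h3' 0, h3' 1⟩
  · intro m hm0
    have hmk : m ∈ LinearMap.ker φ := LinearMap.mem_ker.mpr hm0
    have hsum := bKB.sum_repr ⟨m, hmk⟩
    rw [Fin.sum_univ_two] at hsum
    exact ⟨bKB.repr ⟨m, hmk⟩ 0, bKB.repr ⟨m, hmk⟩ 1,
      (congrArg (fun z : LinearMap.ker φ => z.1) hsum).symm⟩


private lemma part3 (h3 : (3:F) = 0)
    (hns : ∀ u v : F, u*u + v*v = 0 → u = 0 ∧ v = 0)
    (G : Submodule F (Fin 6 → F)) (hTS : TotallySingular (hypQuadric F) G)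
    (hG3 : Module.finrank F G = 3) :
    (segreOvoid F ∩ {p | p ≤ G}).ncard = 1 := by
  classical
  have hQ : ∀ v ∈ G, v 0 * v 5 + v 1 * v 4 + v 2 * v 3 = 0 := fun v hv => hTS v hv
  have hBG : ∀ u ∈ G, ∀ w ∈ G, bb F u w = 0 := by
    intro u hu w hw
    have h12 := hQ (u + w) (add_mem hu hw)
    simp only [Pi.add_apply] at h12
    rw [bb_apply]
    linear_combination h12 - hQ u hu - hQ w hw
  by_cases hE : (![0,0,0,0,0,1] : Fin 6 → F) ∈ G
  · have hset1 : segreOvoid F ∩ {p | p ≤ G} = {Submodule.span F {![0,0,0,0,0,1]}} := by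
      apply Set.eq_singleton_iff_unique_mem.mpr
      constructor
      · exact ⟨Or.inr rfl, Submodule.span_le.mpr (Set.singleton_subset_iff.mpr hE)⟩
      · rintro p ⟨(⟨x, y, rfl⟩ | rfl), hle⟩
        · exfalso
          have hvG : (![1, x, y, x + y, x + 2 * y, -(y * (x + y)) - x * (x + 2 * y)] : Fin 6 → F)
              ∈ G := hle (Submodule.mem_span_singleton_self _)
          have hb := hBG _ hvG _ hE
          rw [bb_apply] at hb
          simp only [v6_0, v6_1, v6_2, v6_3, v6_4, v6_5] at hb
          norm_num at hb
        · rfl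
    rw [hset1, Set.ncard_singleton]
  · -- e5 ∉ G
    have hGle : G ≤ (bb F).orthogonal G := by
      intro v hv
      rw [LinearMap.BilinForm.mem_orthogonal_iff]
      intro n hn
      exact hBG n hn v hv
    have hGorth : G = (bb F).orthogonal G := by
      apply Submodule.eq_of_le_of_finrank_le hGle
      rw [LinearMap.BilinForm.finrank_orthogonal bb_nondeg G, Module.finrank_fin_fun, hG3]
    have hex : ∃ g ∈ G, g 0 ≠ 0 := by
      by_contra hc
      push_neg at hc
      apply hE
      rw [hGorth, LinearMap.BilinForm.mem_orthogonal_iff]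
      intro n hn
      have hn0 := hc n hn
      show bb F n _ = 0
      rw [bb_apply]
      simp only [v6_0, v6_1, v6_2, v6_3, v6_4, v6_5]
      rw [hn0]
      ring
    obtain ⟨g0, hg0G, hg00⟩ := hex
    set g : Fin 6 → F := (g0 0)⁻¹ • g0 with hgdef
    have hgG : g ∈ G := Submodule.smul_mem _ _ hg0G
    have hg1 : g 0 = 1 := by
      rw [hgdef, Pi.smul_apply, smul_eq_mul]
      exact inv_mul_cancel₀ hg00
    -- get k, k'
    obtain ⟨k, k', hkG, hk'G, hk0, hk'0, hkk'ind, hspan⟩ :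
        ∃ k k' : Fin 6 → F, k ∈ G ∧ k' ∈ G ∧ k 0 = 0 ∧ k' 0 = 0 ∧
          (∀ cc cc' : F, cc • k + cc' • k' = 0 → cc = 0 ∧ cc' = 0) ∧
          (∀ m : Fin 6 → F, m ∈ G → m 0 = 0 → ∃ uu ww : F, m = uu • k + ww • k') := by
      have hrange : LinearMap.range ((LinearMap.proj 0 : (Fin 6 → F) →ₗ[F] F).comp G.subtype)
          = ⊤ := by
        rw [LinearMap.range_eq_top]
        intro cc
        refine ⟨⟨cc • g, Submodule.smul_mem _ _ hgG⟩, ?_⟩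
        show (cc • g) 0 = cc
        rw [Pi.smul_apply, smul_eq_mul, hg1, mul_one]
      obtain ⟨k0, k0', h1, h2, hind0, hspan0⟩ := ker_basis_pair hG3
        ((LinearMap.proj 0 : (Fin 6 → F) →ₗ[F] F).comp G.subtype) hrange
      refine ⟨k0.1, k0'.1, k0.2, k0'.2, h1, h2, ?_, ?_⟩
      · intro cc cc' hcc
        exact hind0 cc cc' (Subtype.ext hcc)
      · intro m hm hm0
        obtain ⟨uu, ww, hval⟩ := hspan0 ⟨m, hm⟩ hm0
        exact ⟨uu, ww, congrArg Subtype.val hval⟩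
    -- scalar data
    have hkQ : k 1 * k 4 + k 2 * k 3 = 0 := by
      have := hQ k hkG
      linear_combination this - k 5 * hk0
    have hk'Q : k' 1 * k' 4 + k' 2 * k' 3 = 0 := by
      have := hQ k' hk'G
      linear_combination this - k' 5 * hk'0
    have he : g 5 = -(g 1 * g 4 + g 2 * g 3) := by
      have := hQ g hgG
      linear_combination this - g 5 * hg1
    have hp5 : k 5 = -(g 1 * k 4 + g 4 * k 1 + g 2 * k 3 + g 3 * k 2) := by
      have := hBG g hgG k hkG
      rw [bb_apply] at this
      linear_combination this - k 5 * hg1 - g 5 * hk0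
    have hr5 : k' 5 = -(g 1 * k' 4 + g 4 * k' 1 + g 2 * k' 3 + g 3 * k' 2) := by
      have := hBG g hgG k' hk'G
      rw [bb_apply] at this
      linear_combination this - k' 5 * hg1 - g 5 * hk'0
    have hBkk' : k 1 * k' 4 + k 4 * k' 1 + k 2 * k' 3 + k 3 * k' 2 = 0 := by
      have := hBG k hkG k' hk'G
      rw [bb_apply] at this
      linear_combination this - k 5 * hk'0 - k' 5 * hk0
    have hpne : ¬ (k 1 = 0 ∧ k 2 = 0 ∧ k 3 = 0 ∧ k 4 = 0) := by
      rintro ⟨h1, h2, h3', h4⟩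
      have hk5 : k 5 ≠ 0 := by
        intro h5
        have hkz : k = 0 := funext6 _ _ hk0 h1 h2 h3' h4 h5
        have := (hkk'ind 1 0 (by rw [hkz]; simp)).1
        exact one_ne_zero this
      apply hE
      have heq : (![0,0,0,0,0,1] : Fin 6 → F) = (k 5)⁻¹ • k := by
        refine funext6 _ _ ?_ ?_ ?_ ?_ ?_ ?_
        · rw [v6_0, Pi.smul_apply, smul_eq_mul, hk0, mul_zero]
        · rw [v6_1, Pi.smul_apply, smul_eq_mul, h1, mul_zero]
        · rw [v6_2, Pi.smul_apply, smul_eq_mul, h2, mul_zero]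
        · rw [v6_3, Pi.smul_apply, smul_eq_mul, h3', mul_zero]
        · rw [v6_4, Pi.smul_apply, smul_eq_mul, h4, mul_zero]
        · rw [v6_5, Pi.smul_apply, smul_eq_mul, inv_mul_cancel₀ hk5]
      rw [heq]
      exact Submodule.smul_mem _ _ hkG
    have hind : ∀ μ : F, ¬ (k' 1 = μ * k 1 ∧ k' 2 = μ * k 2 ∧ k' 3 = μ * k 3 ∧ k' 4 = μ * k 4) := by
      rintro μ ⟨h1, h2, h3', h4⟩
      by_cases hm5 : k' 5 - μ * k 5 = 0
      · have hkz : μ • k + (-1 : F) • k' = 0 := by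
          refine funext6 _ _ ?_ ?_ ?_ ?_ ?_ ?_ <;>
            simp only [Pi.add_apply, Pi.smul_apply, smul_eq_mul, Pi.zero_apply]
          · rw [hk0, hk'0]; ring
          · linear_combination -h1
          · linear_combination -h2
          · linear_combination -h3'
          · linear_combination -h4
          · linear_combination -hm5
        have := (hkk'ind μ (-1) hkz).2
        norm_num at this
      · apply hE
        have heq : (![0,0,0,0,0,1] : Fin 6 → F) = (k' 5 - μ * k 5)⁻¹ • (k' - μ • k) := by
          refine funext6 _ _ ?_ ?_ ?_ ?_ ?_ ?_ <;>
            simp only [v6_0, v6_1, v6_2, v6_3, v6_4, v6_5, Pi.smul_apply, Pi.sub_apply,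
              smul_eq_mul]
          · rw [hk0, hk'0]; ring
          · rw [h1]; ring
          · rw [h2]; ring
          · rw [h3']; ring
          · rw [h4]; ring
          · rw [inv_mul_cancel₀ hm5]
        rw [heq]
        exact Submodule.smul_mem _ _ (sub_mem hk'G (Submodule.smul_mem _ _ hkG))
    -- apply core
    obtain ⟨z, hz, huniq⟩ := core h3 hns (g 1) (g 2) (g 3) (g 4)
      (k 1) (k 2) (k 3) (k 4) (k 5) (k' 1) (k' 2) (k' 3) (k' 4) (k' 5) (g 5)
      he hp5 hr5 hkQ hk'Q hBkk' hpne hind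
    obtain ⟨x, y, u, w⟩ := z
    obtain ⟨e1, e2, e3, e4, e5⟩ := hz
    dsimp only at e1 e2 e3 e4 e5 huniq
    have hvmem : vv x y ∈ G := by
      have hveq : vv x y = g + (u • k + w • k') := by
        refine funext6 _ _ ?_ ?_ ?_ ?_ ?_ ?_ <;>
          simp only [vv, v6_0, v6_1, v6_2, v6_3, v6_4, v6_5, Pi.add_apply, Pi.smul_apply,
            smul_eq_mul]
        · rw [hg1, hk0, hk'0]; ring
        · linear_combination e1
        · linear_combination e2
        · linear_combination e3
        · linear_combination e4
        · linear_combination e5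
      rw [hveq]
      exact add_mem hgG (add_mem (Submodule.smul_mem _ _ hkG) (Submodule.smul_mem _ _ hk'G))
    have huniqxy : ∀ x' y' : F, vv x' y' ∈ G → x' = x ∧ y' = y := by
      intro x' y' hv'
      have hsub : vv x' y' - g ∈ G := sub_mem hv' hgG
      have hsub0 : (vv x' y' - g) 0 = 0 := by
        simp only [Pi.sub_apply, vv, v6_0, hg1]
        ring
      obtain ⟨u', w', hcomb⟩ := hspan _ hsub hsub0
      have hco : ∀ i : Fin 6, vv x' y' i - g i = u' * k i + w' * k' i := by
        intro i
        have := congrFun hcomb i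
        simpa [Pi.sub_apply, Pi.add_apply, Pi.smul_apply, smul_eq_mul] using this
      have hc1 := hco 1
      have hc2 := hco 2
      have hc3 := hco 3
      have hc4 := hco 4
      have hc5 := hco 5
      simp only [vv, v6_1, v6_2, v6_3, v6_4, v6_5] at hc1 hc2 hc3 hc4 hc5
      have := huniq (x', y', u', w') ⟨by dsimp only; linear_combination hc1,
        by dsimp only; linear_combination hc2, by dsimp only; linear_combination hc3,
        by dsimp only; linear_combination hc4, by dsimp only; linear_combination hc5⟩
      rw [Prod.ext_iff, Prod.ext_iff, Prod.ext_iff] at this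
      exact ⟨this.1, this.2.1⟩
    have hsetG : segreOvoid F ∩ {p | p ≤ G} = {Submodule.span F {vv x y}} := by
      apply Set.eq_singleton_iff_unique_mem.mpr
      constructor
      · exact ⟨Or.inl ⟨x, y, rfl⟩, Submodule.span_le.mpr (Set.singleton_subset_iff.mpr hvmem)⟩
      · rintro p ⟨(⟨x', y', rfl⟩ | rfl), hle⟩
        · have hv' : vv x' y' ∈ G := hle (Submodule.mem_span_singleton_self _)
          obtain ⟨hx', hy'⟩ := huniqxy x' y' hv'
          rw [hx', hy']
          rfl
        · exact absurd (hle (Submodule.mem_span_singleton_self _)) hE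
    rw [hsetG, Set.ncard_singleton]

end

theorem segreOvoid_is_ovoid
    {q h : ℕ} (hodd : Odd h) (hq : q = 3 ^ h)
    {F : Type} [Field F] [Fintype F] (hcard : Fintype.card F = q) :
    segreOvoid F ⊆ QuadricPoints (hypQuadric F) ∧
    (segreOvoid F).ncard = q ^ 2 + 1 ∧
      ∀ G : Submodule F (Fin 6 → F),
        TotallySingular (hypQuadric F) G → Module.finrank F G = 3 →
          (segreOvoid F ∩ {p | p ≤ G}).ncard = 1 := by
  have h3 : (3 : F) = 0 := char3 hodd hq hcard
  have hns := nonsq hodd hq hcard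
  exact ⟨part1 F, part2 hcard, fun G hTS hG3 => part3 h3 hns G hTS hG3⟩
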